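/- arXiv:2008.00449 — 2 statements merged into one kernel-verified Lean document; each statement's English description precedes it below -/
import Mathlib

section
/- Let U and V be complex Banach spaces, U₀, U₁ ⊆ U and V₀, V₁ ⊆ V closed linear subspaces, and H : U → V a bounded linear operator with H(U₀) ⊆ V₀ and H(U₁) ⊆ V₁. Suppose the induced quotient operator H₀ : U/U₀ → V/V₀ is invertible and that max{dist(U₀, U₁), dist(V₀, V₁)} < 1 / (2(1 + ‖H‖·‖H₀⁻¹‖)). Then the quotient operator H₁ : U/U₁ → V/V₁ is invertible and ‖H₁⁻¹‖ ≤ 2‖H₀⁻¹‖. -/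
open Metric Pointwise

noncomputable section

/-- The distance between two closed subspaces `A`, `B` of a normed space `U`:
`dist(A, B) = sup_{‖u‖ = 1} |dist(u, A) − dist(u, B)|`. -/
def subspaceDist {U : Type*} [NormedAddCommGroup U] [NormedSpace ℂ U]
    (A B : Submodule ℂ U) : ℝ :=
  sSup {r : ℝ | ∃ u : U, ‖u‖ = 1 ∧
    r = |Metric.infDist u (A : Set U) - Metric.infDist u (B : Set U)|}

section Helpers

variable {U : Type*} [NormedAddCommGroup U] [NormedSpace ℂ U]

lemma norm_mk_eq_infDist (S : Submodule ℂ U) (u : U) :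
    ‖(Submodule.Quotient.mk u : U ⧸ S)‖ = infDist u (S : Set U) :=
  QuotientAddGroup.norm_mk (S := S.toAddSubgroup) u

lemma infDist_smul_submodule (S : Submodule ℂ U) {c : ℂ} (hc : c ≠ 0) (u : U) :
    infDist (c • u) (S : Set U) = ‖c‖ * infDist u (S : Set U) := by
  have h : c • (S : Set U) = (S : Set U) := by
    ext x
    simp only [Set.mem_smul_set_iff_inv_smul_mem₀ hc, SetLike.mem_coe]
    exact ⟨fun h => by simpa [smul_smul, mul_inv_cancel₀ hc] using S.smul_mem c h,
      fun h => S.smul_mem _ h⟩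
  conv_lhs => rw [← h, infDist_smul₀ hc]

lemma subspaceDist_bddAbove (A B : Submodule ℂ U) :
    BddAbove {r : ℝ | ∃ u : U, ‖u‖ = 1 ∧
      r = |Metric.infDist u (A : Set U) - Metric.infDist u (B : Set U)|} := by
  refine ⟨1, ?_⟩
  rintro r ⟨u, hu, rfl⟩
  have hA : infDist u (A : Set U) ≤ 1 := by
    simpa [hu] using infDist_le_dist_of_mem (x := u) (SetLike.mem_coe.2 A.zero_mem)
  have hB : infDist u (B : Set U) ≤ 1 := by
    simpa [hu] using infDist_le_dist_of_mem (x := u) (SetLike.mem_coe.2 B.zero_mem)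
  have hA0 : 0 ≤ infDist u (A : Set U) := infDist_nonneg
  have hB0 : 0 ≤ infDist u (B : Set U) := infDist_nonneg
  rw [abs_le]; constructor <;> linarith

lemma subspaceDist_nonneg (A B : Submodule ℂ U) : 0 ≤ subspaceDist A B :=
  Real.sSup_nonneg (by rintro r ⟨u, hu, rfl⟩; exact abs_nonneg _)

lemma abs_infDist_sub_le (A B : Submodule ℂ U) (u : U) :
    |infDist u (A : Set U) - infDist u (B : Set U)| ≤ subspaceDist A B * ‖u‖ := by
  rcases eq_or_ne u 0 with rfl | hu
  · simp [infDist_zero_of_mem (SetLike.mem_coe.2 A.zero_mem),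
      infDist_zero_of_mem (SetLike.mem_coe.2 B.zero_mem)]
  · have hun : (0:ℝ) < ‖u‖ := norm_pos_iff.2 hu
    set c : ℂ := (‖u‖ : ℂ) with hc
    have hc0 : c ≠ 0 := Complex.ofReal_ne_zero.2 hun.ne'
    have hnc : ‖c‖ = ‖u‖ := by simp [hc, Complex.norm_real, abs_norm]
    set w := c⁻¹ • u with hw
    have hcw : c • w = u := by rw [hw, smul_smul, mul_inv_cancel₀ hc0, one_smul]
    have hwn : ‖w‖ = 1 := by
      rw [hw, norm_smul, norm_inv, hnc, inv_mul_cancel₀ hun.ne']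
    have hA := infDist_smul_submodule A hc0 w
    have hB := infDist_smul_submodule B hc0 w
    rw [hcw, hnc] at hA hB
    have hmem : |infDist w (A : Set U) - infDist w (B : Set U)| ≤ subspaceDist A B :=
      le_csSup (subspaceDist_bddAbove A B) ⟨w, hwn, rfl⟩
    calc |infDist u (A : Set U) - infDist u (B : Set U)|
        = ‖u‖ * |infDist w (A : Set U) - infDist w (B : Set U)| := by
          rw [hA, hB, ← mul_sub, abs_mul, abs_of_pos hun]
      _ ≤ ‖u‖ * subspaceDist A B := mul_le_mul_of_nonneg_left hmem hun.le
      _ = subspaceDist A B * ‖u‖ := mul_comm _ _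

/-- One-sided form. -/
lemma infDist_le_infDist_add (A B : Submodule ℂ U) (u : U) :
    infDist u (B : Set U) ≤ infDist u (A : Set U) + subspaceDist A B * ‖u‖ := by
  have h := abs_infDist_sub_le A B u
  have := neg_abs_le (infDist u (A : Set U) - infDist u (B : Set U))
  linarith

/-- One-sided form, other direction. -/
lemma infDist_le_infDist_add' (A B : Submodule ℂ U) (u : U) :
    infDist u (A : Set U) ≤ infDist u (B : Set U) + subspaceDist A B * ‖u‖ := by
  have h := abs_infDist_sub_le A B u
  have := le_abs_self (infDist u (A : Set U) - infDist u (B : Set U))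
  linarith

end Helpers

set_option maxHeartbeats 4000000 in
/-- If `H : U → V` maps `U₀` into `V₀` and `U₁` into `V₁`, the induced
quotient operator `H₀ : U/U₀ → V/V₀` is invertible, and
`max{dist(U₀,U₁), dist(V₀,V₁)} < 1/(2(1 + ‖H‖‖H₀⁻¹‖))`, then the quotient operator
`H₁ : U/U₁ → V/V₁` is invertible with `‖H₁⁻¹‖ ≤ 2‖H₀⁻¹‖`. -/
theorem quotient_operator_invertible_perturbation
    {U V : Type*} [NormedAddCommGroup U] [NormedSpace ℂ U] [CompleteSpace U]
    [NormedAddCommGroup V] [NormedSpace ℂ V] [CompleteSpace V]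
    (U₀ U₁ : Submodule ℂ U) (V₀ V₁ : Submodule ℂ V)
    (hU₀ : IsClosed (U₀ : Set U)) (hU₁ : IsClosed (U₁ : Set U))
    (hV₀ : IsClosed (V₀ : Set V)) (hV₁ : IsClosed (V₁ : Set V))
    (H : U →L[ℂ] V)
    (h0 : U₀ ≤ V₀.comap (H : U →ₗ[ℂ] V)) (h1 : U₁ ≤ V₁.comap (H : U →ₗ[ℂ] V))
    (e₀ : (U ⧸ U₀) ≃L[ℂ] (V ⧸ V₀))
    (he₀ : (e₀ : (U ⧸ U₀) →ₗ[ℂ] (V ⧸ V₀)) = Submodule.mapQ U₀ V₀ (H : U →ₗ[ℂ] V) h0)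
    (hdist : max (subspaceDist U₀ U₁) (subspaceDist V₀ V₁)
      < 1 / (2 * (1 + ‖H‖ * ‖(e₀.symm : (V ⧸ V₀) →L[ℂ] (U ⧸ U₀))‖))) :
    ∃ e₁ : (U ⧸ U₁) ≃L[ℂ] (V ⧸ V₁),
      (e₁ : (U ⧸ U₁) →ₗ[ℂ] (V ⧸ V₁)) = Submodule.mapQ U₁ V₁ (H : U →ₗ[ℂ] V) h1 ∧
      ‖(e₁.symm : (V ⧸ V₁) →L[ℂ] (U ⧸ U₁))‖
        ≤ 2 * ‖(e₀.symm : (V ⧸ V₀) →L[ℂ] (U ⧸ U₀))‖ := by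
  haveI : IsClosed (U₁ : Set U) := hU₁
  haveI : IsClosed (V₁ : Set V) := hV₁
  set M : ℝ := ‖(e₀.symm : (V ⧸ V₀) →L[ℂ] (U ⧸ U₀))‖ with hMdef
  set δ : ℝ := max (subspaceDist U₀ U₁) (subspaceDist V₀ V₁) with hδdef
  have hδU : subspaceDist U₀ U₁ ≤ δ := by rw [hδdef]; exact le_max_left _ _
  have hδV : subspaceDist V₀ V₁ ≤ δ := by rw [hδdef]; exact le_max_right _ _
  have hM0 : 0 ≤ M := by
    rw [hMdef]; exact norm_nonneg ((e₀.symm : (V ⧸ V₀) →L[ℂ] (U ⧸ U₀)))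
  clear_value M δ
  have hH0 : (0:ℝ) ≤ ‖H‖ := norm_nonneg _
  have hδ0 : 0 ≤ δ := le_trans (subspaceDist_nonneg U₀ U₁) hδU
  have hden : (0:ℝ) < 2 * (1 + ‖H‖ * M) := by nlinarith
  have hkey : δ * (1 + ‖H‖ * M) ≤ 1/2 := by
    rw [lt_div_iff₀ hden] at hdist
    nlinarith
  have hδhalf : δ ≤ 1/2 := by nlinarith
  -- `e₀` takes `mk u` to `mk (H u)`
  have he₀' : ∀ u : U, e₀ (Submodule.Quotient.mk u) = Submodule.Quotient.mk (H u) := by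
    intro u
    have := LinearMap.congr_fun he₀ (Submodule.Quotient.mk u)
    simpa [Submodule.mapQ_apply] using this
  -- symm bound
  have hsymm : ∀ y : V ⧸ V₀, ‖e₀.symm y‖ ≤ M * ‖y‖ := by
    intro y
    rw [hMdef]
    simpa using (e₀.symm : (V ⧸ V₀) →L[ℂ] (U ⧸ U₀)).le_opNorm y
  have hlow0 : ∀ u : U, ‖(Submodule.Quotient.mk u : U ⧸ U₀)‖
      ≤ M * ‖(Submodule.Quotient.mk (H u) : V ⧸ V₀)‖ := by
    intro u
    calc ‖(Submodule.Quotient.mk u : U ⧸ U₀)‖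
        = ‖e₀.symm (e₀ (Submodule.Quotient.mk u))‖ := by rw [e₀.symm_apply_apply]
      _ ≤ M * ‖e₀ (Submodule.Quotient.mk u)‖ := hsymm _
      _ = M * ‖(Submodule.Quotient.mk (H u) : V ⧸ V₀)‖ := by rw [he₀' u]
  -- the quotient operator `H₁` as a continuous linear map
  have hbound : ∀ x : U ⧸ U₁, ‖Submodule.mapQ U₁ V₁ (H : U →ₗ[ℂ] V) h1 x‖ ≤ ‖H‖ * ‖x‖ := by
    intro x
    refine le_of_forall_pos_le_add fun ε hε => ?_
    have hε' : (0:ℝ) < ε / (‖H‖ + 1) := by positivity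
    obtain ⟨u, hu, hun⟩ := Submodule.Quotient.norm_mk_lt x hε'
    have hxeq : Submodule.mapQ U₁ V₁ (H : U →ₗ[ℂ] V) h1 x
        = Submodule.Quotient.mk ((H : U →ₗ[ℂ] V) u) := by
      rw [← hu, Submodule.mapQ_apply]
    rw [hxeq]
    calc ‖(Submodule.Quotient.mk ((H : U →ₗ[ℂ] V) u) : V ⧸ V₁)‖
        ≤ ‖H u‖ := Submodule.Quotient.norm_mk_le _ _
      _ ≤ ‖H‖ * ‖u‖ := H.le_opNorm u
      _ ≤ ‖H‖ * (‖x‖ + ε / (‖H‖ + 1)) := mul_le_mul_of_nonneg_left hun.le hH0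
      _ ≤ ‖H‖ * ‖x‖ + ε := by
          have : ‖H‖ * (ε / (‖H‖ + 1)) ≤ ε := by
            rw [mul_div_assoc']
            rw [div_le_iff₀ (by positivity)]
            nlinarith
          nlinarith [norm_nonneg x]
  set H₁ : (U ⧸ U₁) →L[ℂ] (V ⧸ V₁) :=
    LinearMap.mkContinuous (Submodule.mapQ U₁ V₁ (H : U →ₗ[ℂ] V) h1) ‖H‖ hbound with hH₁def
  have hH₁mk : ∀ u : U, H₁ (Submodule.Quotient.mk u) = Submodule.Quotient.mk (H u) := by
    intro u
    simp [hH₁def, Submodule.mapQ_apply]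
  -- lower bound for `H₁`
  have hlow : ∀ x : U ⧸ U₁, ‖x‖ ≤ 2 * M * ‖H₁ x‖ := by
    intro x
    refine le_of_forall_pos_le_add fun ε hε => ?_
    obtain ⟨u, hu, hun⟩ := Submodule.Quotient.norm_mk_lt x hε
    have a1 : infDist u (U₁ : Set U) ≤ infDist u (U₀ : Set U) + subspaceDist U₀ U₁ * ‖u‖ :=
      infDist_le_infDist_add U₀ U₁ u
    have a2 : infDist u (U₀ : Set U) ≤ M * infDist (H u) (V₀ : Set V) := by
      rw [← norm_mk_eq_infDist, ← norm_mk_eq_infDist]; exact hlow0 u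
    have a3 : infDist (H u) (V₀ : Set V)
        ≤ infDist (H u) (V₁ : Set V) + subspaceDist V₀ V₁ * ‖H u‖ :=
      infDist_le_infDist_add' V₀ V₁ (H u)
    have a4 : infDist (H u) (V₁ : Set V) = ‖H₁ x‖ := by
      rw [← hu, hH₁mk u, norm_mk_eq_infDist]
    have a5 : ‖H u‖ ≤ ‖H‖ * ‖u‖ := H.le_opNorm u
    have a6 : ‖u‖ ≤ ‖x‖ + ε := hun.le
    have a7 : ‖x‖ = infDist u (U₁ : Set U) := by rw [← hu, norm_mk_eq_infDist]
    have hu0 : (0:ℝ) ≤ ‖u‖ := norm_nonneg u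
    have hx0 : (0:ℝ) ≤ ‖x‖ := norm_nonneg x
    have hH₁x0 : (0:ℝ) ≤ ‖H₁ x‖ := norm_nonneg _
    have hU01 : subspaceDist U₀ U₁ * ‖u‖ ≤ δ * ‖u‖ :=
      mul_le_mul_of_nonneg_right hδU hu0
    have hV01 : subspaceDist V₀ V₁ * ‖H u‖ ≤ δ * ‖H u‖ :=
      mul_le_mul_of_nonneg_right hδV (norm_nonneg _)
    -- combine: ‖x‖ ≤ M‖H₁x‖ + δ(1 + M‖H‖)‖u‖ ≤ M‖H₁x‖ + (1/2)(‖x‖+ε)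
    have comb : ‖x‖ ≤ M * ‖H₁ x‖ + δ * (1 + ‖H‖ * M) * ‖u‖ := by
      have hδHu : δ * ‖H u‖ ≤ δ * (‖H‖ * ‖u‖) := mul_le_mul_of_nonneg_left a5 hδ0
      have hMa3 : M * infDist (H u) (V₀ : Set V)
          ≤ M * (‖H₁ x‖ + δ * (‖H‖ * ‖u‖)) := by
        apply mul_le_mul_of_nonneg_left _ hM0
        rw [← a4]; linarith
      nlinarith [mul_nonneg hM0 hH₁x0]
    have hfin : δ * (1 + ‖H‖ * M) * ‖u‖ ≤ (1/2) * (‖x‖ + ε) := by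
      have := mul_le_mul_of_nonneg_right hkey (le_trans hu0 (le_of_eq rfl) : (0:ℝ) ≤ ‖u‖)
      nlinarith [mul_le_mul_of_nonneg_left a6 (mul_nonneg hδ0 (by nlinarith : (0:ℝ) ≤ 1 + ‖H‖ * M))]
    linarith
  -- injectivity
  have hker : LinearMap.ker (H₁ : (U ⧸ U₁) →ₗ[ℂ] (V ⧸ V₁)) = ⊥ := by
    refine LinearMap.ker_eq_bot'.mpr fun x hx => ?_
    have := hlow x
    rw [show H₁ x = 0 from hx, norm_zero, mul_zero] at this
    exact norm_le_zero_iff.mp this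
  -- surjectivity
  have hanti : AntilipschitzWith (⟨2 * M, by positivity⟩ : NNReal) H₁ := by
    refine AddMonoidHomClass.antilipschitz_of_bound H₁ fun x => ?_
    exact hlow x
  have hclosedR : IsClosed ((LinearMap.range (H₁ : (U ⧸ U₁) →ₗ[ℂ] (V ⧸ V₁))) :
      Set (V ⧸ V₁)) := by
    rw [LinearMap.coe_range]
    exact hanti.isClosed_range H₁.uniformContinuous
  set R : Submodule ℂ (V ⧸ V₁) := LinearMap.range (H₁ : (U ⧸ U₁) →ₗ[ℂ] (V ⧸ V₁)) with hRdef
  haveI : IsClosed (R : Set (V ⧸ V₁)) := hclosedR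
  have hRapprox : ∀ y : V ⧸ V₁,
      ‖(Submodule.Quotient.mk y : (V ⧸ V₁) ⧸ R)‖ ≤ (1/2) * ‖y‖ := by
    intro y
    refine le_of_forall_pos_le_add fun ε hε => ?_
    have hε' : (0:ℝ) < ε / (1 + ‖H‖) := by positivity
    obtain ⟨v, hv, hvn⟩ := Submodule.Quotient.norm_mk_lt y hε'
    set x₀ : U ⧸ U₀ := e₀.symm (Submodule.Quotient.mk v) with hx₀def
    have hx₀ : ‖x₀‖ ≤ M * ‖v‖ := by
      refine le_trans (hsymm _) ?_
      exact mul_le_mul_of_nonneg_left (Submodule.Quotient.norm_mk_le _ _) hM0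
    obtain ⟨u, hu, hun⟩ := Submodule.Quotient.norm_mk_lt x₀ hε'
    have he : (Submodule.Quotient.mk (H u) : V ⧸ V₀) = Submodule.Quotient.mk v := by
      rw [← he₀' u, hu, hx₀def, e₀.apply_symm_apply]
    have hmem : H u - v ∈ V₀ := (Submodule.Quotient.eq V₀).mp he
    have hmem' : v - H u ∈ V₀ := by simpa using V₀.neg_mem hmem
    have h0d : infDist (v - H u) (V₀ : Set V) = 0 :=
      infDist_zero_of_mem (SetLike.mem_coe.2 hmem')
    have hu1 : ‖u‖ ≤ M * ‖v‖ + ε / (1 + ‖H‖) := by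
      refine le_trans hun.le ?_; linarith
    have hv1 : ‖v‖ ≤ ‖y‖ + ε / (1 + ‖H‖) := hvn.le
    -- mk y = mk (y - H₁ (mk u)) in the quotient by the range
    have hzero : (Submodule.Quotient.mk (H₁ (Submodule.Quotient.mk u)) :
        (V ⧸ V₁) ⧸ R) = 0 :=
      (Submodule.Quotient.mk_eq_zero R).mpr ⟨Submodule.Quotient.mk u, rfl⟩
    have hstep : (Submodule.Quotient.mk y : (V ⧸ V₁) ⧸ R)
        = Submodule.Quotient.mk (y - H₁ (Submodule.Quotient.mk u)) := by
      rw [Submodule.Quotient.mk_sub, hzero, sub_zero]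
    have hrep : y - H₁ (Submodule.Quotient.mk u)
        = (Submodule.Quotient.mk (v - H u) : V ⧸ V₁) := by
      rw [hH₁mk u, ← hv, ← Submodule.Quotient.mk_sub]
    have hd1 : ‖(Submodule.Quotient.mk y : (V ⧸ V₁) ⧸ R)‖
        ≤ infDist (v - H u) (V₁ : Set V) := by
      rw [hstep, hrep]
      refine le_trans (Submodule.Quotient.norm_mk_le _ _) ?_
      rw [norm_mk_eq_infDist]
    have hd2 : infDist (v - H u) (V₁ : Set V) ≤ δ * ‖v - H u‖ := by
      have := infDist_le_infDist_add V₀ V₁ (v - H u)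
      rw [h0d, zero_add] at this
      exact le_trans this (mul_le_mul_of_nonneg_right hδV (norm_nonneg _))
    have hvHu : ‖v - H u‖ ≤ ‖v‖ + ‖H‖ * ‖u‖ :=
      le_trans (norm_sub_le _ _) (by linarith [H.le_opNorm u])
    have hδH : δ * ‖H‖ ≤ (1/2) * ‖H‖ := mul_le_mul_of_nonneg_right hδhalf hH0
    have hy0 : (0:ℝ) ≤ ‖y‖ := norm_nonneg y
    have hv0 : (0:ℝ) ≤ ‖v‖ := norm_nonneg v
    have hu0 : (0:ℝ) ≤ ‖u‖ := norm_nonneg u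
    -- numeric estimate
    have hfin : δ * ‖v - H u‖ ≤ (1/2) * ‖y‖ + ε := by
      have e1 : δ * ‖v - H u‖ ≤ δ * (‖v‖ + ‖H‖ * ‖u‖) :=
        mul_le_mul_of_nonneg_left hvHu hδ0
      have e2 : δ * (‖v‖ + ‖H‖ * ‖u‖)
          ≤ δ * (‖v‖ + ‖H‖ * (M * ‖v‖ + ε / (1 + ‖H‖))) := by
        apply mul_le_mul_of_nonneg_left _ hδ0
        nlinarith [mul_le_mul_of_nonneg_left hu1 hH0]
      have e3 : δ * (‖v‖ + ‖H‖ * (M * ‖v‖ + ε / (1 + ‖H‖)))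
          = δ * (1 + ‖H‖ * M) * ‖v‖ + δ * ‖H‖ * (ε / (1 + ‖H‖)) := by ring
      have e4 : δ * (1 + ‖H‖ * M) * ‖v‖ ≤ (1/2) * ‖v‖ :=
        mul_le_mul_of_nonneg_right hkey hv0
      have e5 : δ * ‖H‖ * (ε / (1 + ‖H‖)) ≤ (1/2) * ‖H‖ * (ε / (1 + ‖H‖)) :=
        mul_le_mul_of_nonneg_right hδH (by positivity)
      have e6 : (1/2) * ‖v‖ ≤ (1/2) * ‖y‖ + (1/2) * (ε / (1 + ‖H‖)) := by linarith
      have e7 : (1/2) * (ε / (1 + ‖H‖)) + (1/2) * ‖H‖ * (ε / (1 + ‖H‖)) = ε / 2 := by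
        field_simp
      linarith
    linarith [le_trans hd1 hd2]
  have hrange : LinearMap.range (H₁ : (U ⧸ U₁) →ₗ[ℂ] (V ⧸ V₁)) = ⊤ := by
    rw [← hRdef]
    refine Submodule.eq_top_iff'.mpr fun y => ?_
    rw [← Submodule.Quotient.mk_eq_zero R]
    have hnorm : ‖(Submodule.Quotient.mk y : (V ⧸ V₁) ⧸ R)‖ = 0 := by
      set t : ℝ := ‖(Submodule.Quotient.mk y : (V ⧸ V₁) ⧸ R)‖ with htdef
      have ht0 : 0 ≤ t := norm_nonneg _
      have hhalf : t ≤ (1/2) * t := by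
        refine le_of_forall_pos_le_add fun ε hε => ?_
        obtain ⟨z, hz, hzn⟩ :=
          Submodule.Quotient.norm_mk_lt (Submodule.Quotient.mk y : (V ⧸ V₁) ⧸ R) hε
        have := hRapprox z
        rw [hz] at this
        rw [← htdef] at hzn this
        linarith
      have : t ≤ 0 := by linarith
      linarith
    exact norm_eq_zero.mp hnorm
  -- assemble the continuous linear equivalence
  refine ⟨ContinuousLinearEquiv.ofBijective H₁ hker hrange, ?_, ?_⟩
  · apply LinearMap.ext
    intro x
    simp [ContinuousLinearEquiv.ofBijective, hH₁def]
  · refine ContinuousLinearMap.opNorm_le_bound _ (by positivity) fun y => ?_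
    have h1' : ((ContinuousLinearEquiv.ofBijective H₁ hker hrange).symm :
        (V ⧸ V₁) →L[ℂ] (U ⧸ U₁)) y
        = (ContinuousLinearEquiv.ofBijective H₁ hker hrange).symm y := rfl
    rw [h1']
    have h2' : H₁ ((ContinuousLinearEquiv.ofBijective H₁ hker hrange).symm y) = y :=
      ContinuousLinearEquiv.ofBijective_apply_symm_apply H₁ hker hrange y
    calc ‖(ContinuousLinearEquiv.ofBijective H₁ hker hrange).symm y‖
        ≤ 2 * M * ‖H₁ ((ContinuousLinearEquiv.ofBijective H₁ hker hrange).symm y)‖ :=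
          hlow _
      _ = 2 * M * ‖y‖ := by rw [h2']
end
end

section
/- Let (X₀, X₁) be a Banach couple realized inside a complex vector space V, let 1 ≤ q < ∞ and 0 < θ₀ < θ₁ < 1. Then for every x ∈ i₀(X₀) + i₁(X₁) one has max{‖x‖_{θ₀,q}, ‖x‖_{θ₁,q}} ≤ sup_{θ₀ < θ < θ₁} ‖x‖_{θ,q}; consequently every x belonging to (X₀, X₁)_{θ,q} for all θ ∈ (θ₀, θ₁) with sup_{θ₀<θ<θ₁} ‖x‖_{θ,q} < ∞ belongs to (X₀, X₁)_{θ₀,q} ∩ (X₀, X₁)_{θ₁,q} with the corresponding norm bound. -/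
open MeasureTheory Set ENNReal

noncomputable section

/-- The Peetre K-functional of an element `x` of the ambient space, for a Banach couple
`(X₀, X₁)` realized inside `V` via `i₀, i₁`:
`K(t, x) = inf{ ‖x₀‖ + t‖x₁‖ : x = i₀ x₀ + i₁ x₁ }`. -/
def peetreK {V X₀ X₁ : Type*} [AddCommGroup V] [Module ℂ V]
    [NormedAddCommGroup X₀] [NormedSpace ℂ X₀] [NormedAddCommGroup X₁] [NormedSpace ℂ X₁]
    (i₀ : X₀ →ₗ[ℂ] V) (i₁ : X₁ →ₗ[ℂ] V) (t : ℝ) (x : V) : ℝ :=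
  sInf {r : ℝ | ∃ x₀ : X₀, ∃ x₁ : X₁, x = i₀ x₀ + i₁ x₁ ∧ r = ‖x₀‖ + t * ‖x₁‖}

/-- The real-interpolation norm `‖x‖_{θ,q} = (∫₀^∞ (t^{−θ} K(t,x))^q dt/t)^{1/q}`,
with values in `[0, ∞]`. -/
def interpNorm {V X₀ X₁ : Type*} [AddCommGroup V] [Module ℂ V]
    [NormedAddCommGroup X₀] [NormedSpace ℂ X₀] [NormedAddCommGroup X₁] [NormedSpace ℂ X₁]
    (i₀ : X₀ →ₗ[ℂ] V) (i₁ : X₁ →ₗ[ℂ] V) (θ q : ℝ) (x : V) : ℝ≥0∞ :=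
  (∫⁻ t in Ioi (0 : ℝ),
      (ENNReal.ofReal (t ^ (-θ) * peetreK i₀ i₁ t x)) ^ q * ENNReal.ofReal t⁻¹) ^ (1 / q)

/-- The real-interpolation norm `‖x‖_{θ,∞} = sup_{t>0} t^{−θ} K(t,x)`, in `[0, ∞]`. -/
def interpNormInf {V X₀ X₁ : Type*} [AddCommGroup V] [Module ℂ V]
    [NormedAddCommGroup X₀] [NormedSpace ℂ X₀] [NormedAddCommGroup X₁] [NormedSpace ℂ X₁]
    (i₀ : X₀ →ₗ[ℂ] V) (i₁ : X₁ →ₗ[ℂ] V) (θ : ℝ) (x : V) : ℝ≥0∞ :=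
  ⨆ t ∈ Ioi (0 : ℝ), ENNReal.ofReal (t ^ (-θ) * peetreK i₀ i₁ t x)

open Filter

section Aux

variable {V X₀ X₁ : Type*} [AddCommGroup V] [Module ℂ V]
    [NormedAddCommGroup X₀] [NormedSpace ℂ X₀] [NormedAddCommGroup X₁] [NormedSpace ℂ X₁]
    (i₀ : X₀ →ₗ[ℂ] V) (i₁ : X₁ →ₗ[ℂ] V)

lemma peetreK_monoOn (x : V) (hx : ∃ x₀ : X₀, ∃ x₁ : X₁, x = i₀ x₀ + i₁ x₁) :
    MonotoneOn (fun t => peetreK i₀ i₁ t x) (Ici (0:ℝ)) := by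
  intro s hs t ht hst
  obtain ⟨a, b, hab⟩ := hx
  refine le_csInf ⟨‖a‖ + t * ‖b‖, ⟨a, b, hab, rfl⟩⟩ ?_
  rintro r ⟨x₀, x₁, hx', rfl⟩
  refine csInf_le_of_le ⟨0, ?_⟩ ⟨x₀, x₁, hx', rfl⟩ ?_
  · rintro r ⟨y₀, y₁, -, rfl⟩
    have := hs.out
    positivity
  · have h1 : s * ‖x₁‖ ≤ t * ‖x₁‖ := mul_le_mul_of_nonneg_right hst (norm_nonneg _)
    linarith

lemma peetreK_aemeas (x : V) (hx : ∃ x₀ : X₀, ∃ x₁ : X₁, x = i₀ x₀ + i₁ x₁) :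
    AEMeasurable (fun t => peetreK i₀ i₁ t x) (volume.restrict (Ioi (0:ℝ))) := by
  have hmono := peetreK_monoOn i₀ i₁ x hx
  have hg : Monotone (fun t : ℝ => peetreK i₀ i₁ (max t 0) x) := by
    intro s t h
    exact hmono (le_max_right s 0) (le_max_right t 0) (max_le_max h le_rfl)
  refine (hg.measurable.aemeasurable).congr ?_
  filter_upwards [ae_restrict_mem measurableSet_Ioi] with t ht
  simp [max_eq_left (mem_Ioi.mp ht).le]

lemma interp_le_sup_of_seq (q θ₀ θ₁ θ' : ℝ) (hq : 1 ≤ q)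
    (x : V) (hx : ∃ x₀ : X₀, ∃ x₁ : X₁, x = i₀ x₀ + i₁ x₁)
    (θs : ℕ → ℝ) (hmem : ∀ n, θs n ∈ Ioo θ₀ θ₁)
    (htend : Tendsto θs atTop (nhds θ')) :
    interpNorm i₀ i₁ θ' q x ≤ ⨆ θ ∈ Ioo θ₀ θ₁, interpNorm i₀ i₁ θ q x := by
  set K := fun t => peetreK i₀ i₁ t x with hK
  set F := fun (θ : ℝ) (t : ℝ) =>
    (ENNReal.ofReal (t ^ (-θ) * K t)) ^ q * ENNReal.ofReal t⁻¹ with hF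
  set I := fun θ : ℝ => ∫⁻ t in Ioi (0:ℝ), F θ t with hI
  have hqpos : (0:ℝ) < q := lt_of_lt_of_le one_pos hq
  have hmeas : ∀ θ : ℝ, AEMeasurable (F θ) (volume.restrict (Ioi (0:ℝ))) := by
    intro θ
    have h1 : AEMeasurable (fun t : ℝ => t ^ (-θ)) (volume.restrict (Ioi (0:ℝ))) := by
      have hma : Measurable (fun t : ℝ => Real.exp (Real.log t * (-θ))) :=
        Real.continuous_exp.measurable.comp (Real.measurable_log.mul measurable_const)
      refine hma.aemeasurable.congr ?_
      filter_upwards [ae_restrict_mem measurableSet_Ioi] with t ht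
      rw [Real.rpow_def_of_pos ht]
    have h2 := peetreK_aemeas i₀ i₁ x hx
    exact (((h1.mul h2).ennreal_ofReal.pow_const q).mul
      (measurable_inv.ennreal_ofReal.aemeasurable))
  have hpt : ∀ t ∈ Ioi (0:ℝ),
      Tendsto (fun n => F (θs n) t) atTop (nhds (F θ' t)) := by
    intro t ht
    have ht' : (0:ℝ) < t := ht
    have h1 : Tendsto (fun θ : ℝ => t ^ (-θ)) (nhds θ') (nhds (t ^ (-θ'))) := by
      have : (fun θ : ℝ => t ^ (-θ)) = fun θ : ℝ => Real.exp (Real.log t * (-θ)) := by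
        funext θ; rw [Real.rpow_def_of_pos ht']
      rw [this, Real.rpow_def_of_pos ht']
      exact (Real.continuous_exp.comp (continuous_const.mul continuous_neg)).continuousAt.tendsto
    have h2 : Tendsto (fun n => t ^ (-(θs n)) * K t) atTop (nhds (t ^ (-θ') * K t)) :=
      ((h1.comp htend).mul_const _)
    have h3 : Tendsto (fun n => (ENNReal.ofReal (t ^ (-(θs n)) * K t)) ^ q) atTop
        (nhds ((ENNReal.ofReal (t ^ (-θ') * K t)) ^ q)) :=
      (ENNReal.continuous_rpow_const.tendsto _).comp
        ((ENNReal.continuous_ofReal.tendsto _).comp h2)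
    exact ENNReal.Tendsto.mul_const h3 (Or.inr ENNReal.ofReal_ne_top)
  have hfatou : I θ' ≤ liminf (fun n => I (θs n)) atTop := by
    have heq : I θ' = ∫⁻ t in Ioi (0:ℝ), liminf (fun n => F (θs n) t) atTop := by
      refine lintegral_congr_ae ?_
      filter_upwards [ae_restrict_mem measurableSet_Ioi] with t ht
      exact ((hpt t ht).liminf_eq).symm
    rw [heq]
    exact lintegral_liminf_le' (fun n => hmeas _)
  set T := ⨆ θ ∈ Ioo θ₀ θ₁, interpNorm i₀ i₁ θ q x with hT
  have hITq : ∀ θ ∈ Ioo θ₀ θ₁, I θ ≤ T ^ q := by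
    intro θ hθ
    have h1 : interpNorm i₀ i₁ θ q x ≤ T := hT ▸ le_biSup (fun θ => interpNorm i₀ i₁ θ q x) hθ
    have h2 : I θ = (interpNorm i₀ i₁ θ q x) ^ q := by
      rw [interpNorm, ← ENNReal.rpow_mul, one_div, inv_mul_cancel₀ (ne_of_gt hqpos),
        ENNReal.rpow_one]
    rw [h2]
    exact ENNReal.rpow_le_rpow h1 hqpos.le
  have hlim : liminf (fun n => I (θs n)) atTop ≤ T ^ q := by
    refine le_trans (liminf_le_liminf (Eventually.of_forall fun n => hITq _ (hmem n))) ?_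
    simp [liminf_const]
  have : I θ' ≤ T ^ q := hfatou.trans hlim
  calc interpNorm i₀ i₁ θ' q x = (I θ') ^ (1/q) := rfl
    _ ≤ (T ^ q) ^ (1/q) := ENNReal.rpow_le_rpow this (by positivity)
    _ = T := by
        rw [← ENNReal.rpow_mul, mul_one_div, div_self (ne_of_gt hqpos), ENNReal.rpow_one]

end Aux

/-- For `0 < θ₀ < θ₁ < 1` and `1 ≤ q < ∞`, the end norms are dominated by
the supremum of the intermediate norms: `max{‖x‖_{θ₀,q}, ‖x‖_{θ₁,q}} ≤ sup_{θ₀<θ<θ₁} ‖x‖_{θ,q}`.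
Consequently, if `x ∈ (X₀,X₁)_{θ,q}` for all `θ ∈ (θ₀,θ₁)` with finite supremum of the norms,
then `x ∈ (X₀,X₁)_{θ₀,q} ∩ (X₀,X₁)_{θ₁,q}` with the corresponding norm bound. -/
theorem interp_endpoints_le_sup_intermediate
    {V X₀ X₁ : Type*} [AddCommGroup V] [Module ℂ V]
    [NormedAddCommGroup X₀] [NormedSpace ℂ X₀] [CompleteSpace X₀]
    [NormedAddCommGroup X₁] [NormedSpace ℂ X₁] [CompleteSpace X₁]
    (i₀ : X₀ →ₗ[ℂ] V) (i₁ : X₁ →ₗ[ℂ] V) (hi₀ : Function.Injective i₀)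
    (hi₁ : Function.Injective i₁)
    (q θ₀ θ₁ : ℝ) (hq : 1 ≤ q) (h₀ : 0 < θ₀) (h₀₁ : θ₀ < θ₁) (h₁ : θ₁ < 1)
    (x : V) (hx : ∃ x₀ : X₀, ∃ x₁ : X₁, x = i₀ x₀ + i₁ x₁) :
    max (interpNorm i₀ i₁ θ₀ q x) (interpNorm i₀ i₁ θ₁ q x)
      ≤ ⨆ θ ∈ Ioo θ₀ θ₁, interpNorm i₀ i₁ θ q x := by
  have hd : 0 < θ₁ - θ₀ := sub_pos.2 h₀₁
  have htend0 : Tendsto (fun n : ℕ => (θ₁ - θ₀) / (n + 2)) atTop (nhds 0) := by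
    apply Tendsto.div_atTop tendsto_const_nhds
    exact tendsto_atTop_add_const_right _ _ tendsto_natCast_atTop_atTop
  refine max_le ?_ ?_
  · refine interp_le_sup_of_seq i₀ i₁ q θ₀ θ₁ θ₀ hq x hx
      (fun n => θ₀ + (θ₁ - θ₀) / (n + 2)) (fun n => ?_) ?_
    · constructor
      · have : (0:ℝ) < (θ₁ - θ₀) / (n + 2) := by positivity
        linarith
      · have : (θ₁ - θ₀) / (n + 2) < θ₁ - θ₀ := by
          apply div_lt_self hd; linarith [Nat.cast_nonneg (α := ℝ) n]
        linarith
    · simpa using tendsto_const_nhds.add htend0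
  · refine interp_le_sup_of_seq i₀ i₁ q θ₀ θ₁ θ₁ hq x hx
      (fun n => θ₁ - (θ₁ - θ₀) / (n + 2)) (fun n => ?_) ?_
    · constructor
      · have : (θ₁ - θ₀) / (n + 2) < θ₁ - θ₀ := by
          apply div_lt_self hd; linarith [Nat.cast_nonneg (α := ℝ) n]
        linarith
      · have : (0:ℝ) < (θ₁ - θ₀) / (n + 2) := by positivity
        linarith
    · simpa using tendsto_const_nhds.sub htend0
end
end
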